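/- There exist absolute constants C > 0 and T₀ > 0 such that for every Borel probability measure ν on ℝ supported in [0,2π], every T ≥ T₀ and every θ ∈ ℝ, one has I_ν(θ) := ∫₀^{2π} exp(−(T²/2)·‖v_θ − v_α‖²) dν(α) ≤ C · ω_ν(1/T). -/

import Mathlib

open MeasureTheory Set
open scoped ENNReal Real

namespace Stmt7Aux

/-- distance from `x` to the nearest multiple of `2π`. -/
noncomputable def d (x : ℝ) : ℝ := |x - 2 * π * round (x / (2 * π))|

lemma d_nonneg (x : ℝ) : 0 ≤ d x := abs_nonneg _

lemma d_le_pi (x : ℝ) : d x ≤ π := by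
  have h := abs_sub_round (x / (2 * π))
  have hπ : (0:ℝ) < 2 * π := by positivity
  have hx : x - 2 * π * round (x / (2 * π)) = (2 * π) * (x / (2 * π) - round (x / (2 * π))) := by
    field_simp
  rw [d, hx, abs_mul, abs_of_pos hπ]
  nlinarith [Real.pi_pos]

lemma cos_d (x : ℝ) : Real.cos (d x) = Real.cos x := by
  rw [d, Real.cos_abs]
  have h := Real.cos_add_int_mul_two_pi (x - 2 * π * (round (x / (2 * π)) : ℤ))
    (round (x / (2 * π)))
  rw [show (x - 2 * π * ((round (x / (2 * π)) : ℤ) : ℝ)) + ((round (x / (2 * π)) : ℤ) : ℝ) * (2 * π) = x by ring] at h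
  exact h.symm

lemma quad_le (x : ℝ) : 4 / π ^ 2 * d x ^ 2 ≤ 2 - 2 * Real.cos x := by
  have h1 : Real.cos (d x) ≤ 1 - 2 / π ^ 2 * d x ^ 2 :=
    Real.cos_le_one_sub_mul_cos_sq (by rw [abs_of_nonneg (d_nonneg x)]; exact d_le_pi x)
  rw [cos_d x] at h1
  have h2 : 4 / π ^ 2 * d x ^ 2 = 2 * (2 / π ^ 2 * d x ^ 2) := by ring
  linarith

lemma round_mono : Monotone (round : ℝ → ℤ) := by
  intro a b hab
  rw [round_eq, round_eq]
  exact Int.floor_mono (by linarith)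

lemma round_mem (θ α : ℝ) (hα : α ∈ Icc 0 (2 * π)) :
    round ((θ - α) / (2 * π)) = round (θ / (2 * π)) - 1 ∨
      round ((θ - α) / (2 * π)) = round (θ / (2 * π)) := by
  have h2π : (0:ℝ) < 2 * π := by positivity
  obtain ⟨hα0, hα2⟩ := hα
  have h1 : round ((θ - α) / (2 * π)) ≤ round (θ / (2 * π)) :=
    round_mono (by gcongr; linarith)
  have h2 : round (θ / (2 * π)) - 1 ≤ round ((θ - α) / (2 * π)) := by
    have h3 : θ / (2 * π) - 1 ≤ (θ - α) / (2 * π) := by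
      rw [div_sub' h2π.ne', div_le_div_iff₀ h2π h2π]
      ring_nf
      nlinarith
    have h4 := round_mono h3
    rwa [show θ / (2 * π) - 1 = θ / (2 * π) - ((1:ℤ):ℝ) by norm_num, round_sub_intCast] at h4
  omega

lemma measurable_d : Measurable d := by
  apply Measurable.abs
  apply Measurable.sub measurable_id
  apply Measurable.const_mul
  have h : Measurable fun x : ℝ => (round (x / (2 * π)) : ℤ) := by
    simp only [round_eq]
    exact ((measurable_id.div_const _).add_const _).floor
  exact measurable_from_top.comp h

end Stmt7Aux

/-- Claim bounding `I_ν` by the modulus of continuity: there are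
absolute constants `C, T₀ > 0` such that for every Borel probability measure `ν` on `ℝ`
supported in `[0, 2π]`, every `T ≥ T₀` and every `θ`,
`∫₀^{2π} exp(−(T²/2)‖v_θ − v_α‖²) dν(α) ≤ C ω_ν(1/T)`. -/
theorem stmt7 :
    ∃ C > (0 : ℝ), ∃ T₀ > (0 : ℝ),
      ∀ (ν : Measure ℝ) [IsProbabilityMeasure ν],
        ν (Set.Icc 0 (2 * π))ᶜ = 0 →
        ∀ T : ℝ, T₀ ≤ T → ∀ θ : ℝ,
          (∫⁻ α in Set.Icc 0 (2 * π),
              ENNReal.ofReal (Real.exp (-(T ^ 2 / 2) *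
                ((Real.cos θ - Real.cos α) ^ 2 + (Real.sin θ - Real.sin α) ^ 2))) ∂ν)
            ≤ ENNReal.ofReal C * ⨆ t : ℝ, ν (Set.Icc t (t + 1 / T)) := by
  classical
  have hπ := Real.pi_pos
  set q : ℝ := Real.exp (-(2 / π ^ 2)) with hq
  have hq0 : (0:ℝ) < q := Real.exp_pos _
  have hq1 : q < 1 := by
    rw [hq, Real.exp_lt_one_iff]
    have : (0:ℝ) < 2 / π ^ 2 := by positivity
    linarith
  have h1q : (0:ℝ) < 1 - q := by linarith
  refine ⟨4 * (1 - q)⁻¹, by positivity, 1, one_pos, ?_⟩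
  intro ν _ _hsupp T hT θ
  have hT0 : (0:ℝ) < T := lt_of_lt_of_le one_pos hT
  set ω := ⨆ t : ℝ, ν (Set.Icc t (t + 1 / T)) with hω
  set q' : ℝ≥0∞ := ENNReal.ofReal q with hq'
  have hIcc : ∀ t : ℝ, ν (Set.Icc t (t + 1 / T)) ≤ ω :=
    fun t => le_iSup (fun t => ν (Set.Icc t (t + 1 / T))) t
  set M : ℤ := round (θ / (2 * π)) with hM
  set E : ℕ → Set ℝ := fun k =>
    Icc 0 (2 * π) ∩ {α | (k : ℝ) ≤ T * Stmt7Aux.d (θ - α) ∧ T * Stmt7Aux.d (θ - α) < k + 1}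
    with hE
  have hcover : Icc 0 (2 * π) ⊆ ⋃ k, E k := by
    intro α hα
    refine mem_iUnion.2 ⟨⌊T * Stmt7Aux.d (θ - α)⌋₊, hα, ?_, ?_⟩
    · exact Nat.floor_le (mul_nonneg hT0.le (Stmt7Aux.d_nonneg _))
    · exact Nat.lt_floor_add_one _
  have hEmeas : ∀ k, MeasurableSet (E k) := by
    intro k
    refine measurableSet_Icc.inter ?_
    have hg : Measurable fun α : ℝ => T * Stmt7Aux.d (θ - α) :=
      (Stmt7Aux.measurable_d.comp (measurable_const.sub measurable_id)).const_mul T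
    exact hg (measurableSet_Ico (a := (k : ℝ)) (b := (k : ℝ) + 1))
  have hpt : ∀ k, ∀ α ∈ E k,
      ENNReal.ofReal (Real.exp (-(T ^ 2 / 2) *
        ((Real.cos θ - Real.cos α) ^ 2 + (Real.sin θ - Real.sin α) ^ 2))) ≤ q' ^ k := by
    intro k α hα
    obtain ⟨-, hk1, -⟩ := hα
    have hGeq : (Real.cos θ - Real.cos α) ^ 2 + (Real.sin θ - Real.sin α) ^ 2
        = 2 - 2 * Real.cos (θ - α) := by
      linear_combination Real.sin_sq_add_cos_sq θ + Real.sin_sq_add_cos_sq α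
        + 2 * Real.cos_sub θ α
    have hquad := Stmt7Aux.quad_le (θ - α)
    have hd0 := Stmt7Aux.d_nonneg (θ - α)
    have hk2 : ((k : ℝ)) ^ 2 ≤ (T * Stmt7Aux.d (θ - α)) ^ 2 :=
      pow_le_pow_left₀ (Nat.cast_nonneg k) hk1 2
    have hkk : (k : ℝ) ≤ (k : ℝ) ^ 2 := by
      exact_mod_cast Nat.le_self_pow two_ne_zero k
    have hpi2 : (0:ℝ) < 2 / π ^ 2 := by positivity
    have hT2 : (0:ℝ) ≤ T ^ 2 / 2 := by positivity
    have e1 : 0 ≤ (T ^ 2 / 2) *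
        ((2 - 2 * Real.cos (θ - α)) - 4 / π ^ 2 * Stmt7Aux.d (θ - α) ^ 2) :=
      mul_nonneg hT2 (by linarith)
    have e2 : (2 / π ^ 2) * ((k : ℝ)) ^ 2 ≤ (2 / π ^ 2) * (T * Stmt7Aux.d (θ - α)) ^ 2 :=
      mul_le_mul_of_nonneg_left hk2 hpi2.le
    have e3 : (2 / π ^ 2) * (k : ℝ) ≤ (2 / π ^ 2) * ((k : ℝ)) ^ 2 :=
      mul_le_mul_of_nonneg_left hkk hpi2.le
    have hexp : -(T ^ 2 / 2) *
        ((Real.cos θ - Real.cos α) ^ 2 + (Real.sin θ - Real.sin α) ^ 2)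
        ≤ (k : ℝ) * (-(2 / π ^ 2)) := by
      rw [hGeq]
      have e4 : (T ^ 2 / 2) * (4 / π ^ 2 * Stmt7Aux.d (θ - α) ^ 2)
          = (2 / π ^ 2) * (T * Stmt7Aux.d (θ - α)) ^ 2 := by ring
      nlinarith [e1, e2, e3, e4]
    calc ENNReal.ofReal (Real.exp (-(T ^ 2 / 2) *
          ((Real.cos θ - Real.cos α) ^ 2 + (Real.sin θ - Real.sin α) ^ 2)))
        ≤ ENNReal.ofReal (Real.exp ((k : ℝ) * (-(2 / π ^ 2)))) :=
          ENNReal.ofReal_le_ofReal (Real.exp_le_exp.mpr hexp)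
      _ = q' ^ k := by
          rw [Real.exp_nat_mul, hq', ← ENNReal.ofReal_pow (Real.exp_pos _).le]
  have hmeasE : ∀ k, ν (E k) ≤ 4 * ω := by
    intro k
    have hsub : E k ⊆
        (Icc (θ - 2 * π * ((M : ℝ) - 1) - ((k : ℝ) + 1) / T)
          (θ - 2 * π * ((M : ℝ) - 1) - ((k : ℝ) + 1) / T + 1 / T)
        ∪ Icc (θ - 2 * π * ((M : ℝ) - 1) + (k : ℝ) / T)
          (θ - 2 * π * ((M : ℝ) - 1) + (k : ℝ) / T + 1 / T))
        ∪ (Icc (θ - 2 * π * (M : ℝ) - ((k : ℝ) + 1) / T)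
          (θ - 2 * π * (M : ℝ) - ((k : ℝ) + 1) / T + 1 / T)
        ∪ Icc (θ - 2 * π * (M : ℝ) + (k : ℝ) / T)
          (θ - 2 * π * (M : ℝ) + (k : ℝ) / T + 1 / T)) := by
      rintro α ⟨hα, hk1, hk2⟩
      set m : ℤ := round ((θ - α) / (2 * π)) with hm
      have hd : Stmt7Aux.d (θ - α) = |θ - α - 2 * π * (m : ℝ)| := rfl
      have hlo : (k : ℝ) / T ≤ |θ - α - 2 * π * (m : ℝ)| := by
        rw [div_le_iff₀ hT0, ← hd]; linarith
      have hhi : |θ - α - 2 * π * (m : ℝ)| ≤ ((k : ℝ) + 1) / T := by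
        rw [le_div_iff₀ hT0, ← hd]; linarith
      have hdiv : ((k : ℝ) + 1) / T = (k : ℝ) / T + 1 / T := by ring
      have hcase := Stmt7Aux.round_mem θ α hα
      rw [← hm, ← hM] at hcase
      have habs := abs_le.1 hhi
      rcases le_or_gt 0 (θ - α - 2 * π * (m : ℝ)) with hs | hs
      · -- α ∈ Icc (θ - 2πm - (k+1)/T) (… + 1/T)
        rw [abs_of_nonneg hs] at hlo
        have hmem : α ∈ Icc (θ - 2 * π * (m : ℝ) - ((k : ℝ) + 1) / T)
            (θ - 2 * π * (m : ℝ) - ((k : ℝ) + 1) / T + 1 / T) := by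
          constructor
          · linarith [habs.2]
          · rw [hdiv]; linarith
        rcases hcase with h | h
        · left; left
          rwa [show ((M : ℝ) - 1) = ((m : ℝ)) by push_cast [h]; ring]
        · right; left
          rwa [show ((M : ℝ)) = ((m : ℝ)) by rw [h]]
      · rw [abs_of_neg hs] at hlo
        have hmem : α ∈ Icc (θ - 2 * π * (m : ℝ) + (k : ℝ) / T)
            (θ - 2 * π * (m : ℝ) + (k : ℝ) / T + 1 / T) := by
          constructor
          · linarith
          · rw [hdiv] at habs; linarith [habs.1]
        rcases hcase with h | h
        · left; right
          rwa [show ((M : ℝ) - 1) = ((m : ℝ)) by push_cast [h]; ring]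
        · right; right
          rwa [show ((M : ℝ)) = ((m : ℝ)) by rw [h]]
    have h4 : ∀ t : ℝ, ν (Icc t (t + 1 / T)) ≤ ω := hIcc
    calc ν (E k) ≤ _ := measure_mono hsub
      _ ≤ (ν (Icc (θ - 2 * π * ((M : ℝ) - 1) - ((k : ℝ) + 1) / T)
              (θ - 2 * π * ((M : ℝ) - 1) - ((k : ℝ) + 1) / T + 1 / T))
            + ν (Icc (θ - 2 * π * ((M : ℝ) - 1) + (k : ℝ) / T)
              (θ - 2 * π * ((M : ℝ) - 1) + (k : ℝ) / T + 1 / T)))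
          + (ν (Icc (θ - 2 * π * (M : ℝ) - ((k : ℝ) + 1) / T)
              (θ - 2 * π * (M : ℝ) - ((k : ℝ) + 1) / T + 1 / T))
            + ν (Icc (θ - 2 * π * (M : ℝ) + (k : ℝ) / T)
              (θ - 2 * π * (M : ℝ) + (k : ℝ) / T + 1 / T))) :=
        (measure_union_le _ _).trans (add_le_add (measure_union_le _ _) (measure_union_le _ _))
      _ ≤ (ω + ω) + (ω + ω) := by
        gcongr <;> exact h4 _
      _ = 4 * ω := by ring
  calc (∫⁻ α in Set.Icc 0 (2 * π),
          ENNReal.ofReal (Real.exp (-(T ^ 2 / 2) *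
            ((Real.cos θ - Real.cos α) ^ 2 + (Real.sin θ - Real.sin α) ^ 2))) ∂ν)
      ≤ ∫⁻ α in ⋃ k, E k,
          ENNReal.ofReal (Real.exp (-(T ^ 2 / 2) *
            ((Real.cos θ - Real.cos α) ^ 2 + (Real.sin θ - Real.sin α) ^ 2))) ∂ν :=
        lintegral_mono_set hcover
    _ ≤ ∑' k, ∫⁻ α in E k,
          ENNReal.ofReal (Real.exp (-(T ^ 2 / 2) *
            ((Real.cos θ - Real.cos α) ^ 2 + (Real.sin θ - Real.sin α) ^ 2))) ∂ν :=
        lintegral_iUnion_le _ _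
    _ ≤ ∑' k : ℕ, q' ^ k * (4 * ω) := by
        refine ENNReal.tsum_le_tsum fun k => ?_
        calc (∫⁻ α in E k,
              ENNReal.ofReal (Real.exp (-(T ^ 2 / 2) *
                ((Real.cos θ - Real.cos α) ^ 2 + (Real.sin θ - Real.sin α) ^ 2))) ∂ν)
            ≤ ∫⁻ _ in E k, q' ^ k ∂ν := setLIntegral_mono' (hEmeas k) (hpt k)
          _ = q' ^ k * ν (E k) := setLIntegral_const _ _
          _ ≤ q' ^ k * (4 * ω) := mul_le_mul_right (hmeasE k) _
    _ = (1 - q')⁻¹ * (4 * ω) := by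
        rw [ENNReal.tsum_mul_right, ENNReal.tsum_geometric]
    _ ≤ ENNReal.ofReal (4 * (1 - q)⁻¹) * ω := by
        rw [ENNReal.ofReal_mul (by norm_num : (0:ℝ) ≤ 4),
          ENNReal.ofReal_inv_of_pos h1q,
          ENNReal.ofReal_sub _ hq0.le, ENNReal.ofReal_one, ENNReal.ofReal_ofNat, ← hq']
        exact le_of_eq (by ring)
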